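/- The real line ℝ, with the induced tropical addition a⊞b = {a} if |a|>|b|, {b} if |a|<|b|, {a} if a=b, and the interval [-|a|,|a|] if a=-b, together with the usual multiplication, is a doubly distributive hyperfield: in particular (a⊞b)·(c⊞d) = (ac)⊞(ad)⊞(bc)⊞(bd) for all a,b,c,d ∈ ℝ. -/

import Mathlib

/-- The tropical addition of real numbers, induced from the complex tropical
hyperfield: `a⊞b = {a}` if `|a|>|b|`, `{b}` if `|a|<|b|`, `{a}` if `a=b`,
and the interval `[-|a|,|a|]` if `a=-b`. -/
noncomputable def rAdd (a b : ℝ) : Set ℝ :=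
  if |b| < |a| then {a}
  else if |a| < |b| then {b}
  else if a = b then {a}
  else Set.Icc (-|a|) |a|

/-- Elementwise extension of the real tropical addition to subsets. -/
def setRAdd (A B : Set ℝ) : Set ℝ :=
  ⋃ a ∈ A, ⋃ b ∈ B, rAdd a b

lemma rAdd_eq (a b : ℝ) : rAdd a b =
    if a = -b then Set.Icc (-|a|) |a| else if |b| ≤ |a| then {a} else {b} := by
  unfold rAdd
  rcases lt_trichotomy |a| |b| with h | h | h
  · have hab : a ≠ -b := fun e => by rw [e, abs_neg] at h; exact lt_irrefl _ h
    rw [if_neg (by linarith), if_pos h, if_neg hab, if_neg (not_le.2 h)]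
  · rw [if_neg (by linarith), if_neg (by linarith)]
    by_cases hab : a = -b
    · rw [if_pos hab]
      by_cases heq : a = b
      · have ha : a = 0 := by nlinarith [hab, heq]
        rw [if_pos heq, ha]
        simp
      · rw [if_neg heq]
    · have heq : a = b := by
        rcases abs_eq_abs.1 h with h' | h'
        · exact h'
        · exact absurd h' hab
      rw [if_pos heq, if_neg hab, if_pos h.ge]
  · have hab : a ≠ -b := fun e => by rw [e, abs_neg] at h; exact lt_irrefl _ h
    rw [if_pos h, if_neg hab, if_pos h.le]

lemma rAdd_big {a b : ℝ} (h : |b| < |a|) : rAdd a b = {a} := by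
  rw [rAdd_eq, if_neg (fun e => by rw [e, abs_neg] at h; exact lt_irrefl _ h), if_pos h.le]

lemma rAdd_small {a b : ℝ} (h : |a| < |b|) : rAdd a b = {b} := by
  rw [rAdd_eq, if_neg (fun e => by rw [e, abs_neg] at h; exact lt_irrefl _ h),
    if_neg (not_le.2 h)]

lemma rAdd_self (a : ℝ) : rAdd a a = {a} := by
  by_cases h : a = 0
  · subst h; rw [rAdd_eq]; simp
  · rw [rAdd_eq, if_neg (by intro e; apply h; linarith), if_pos le_rfl]

lemma rAdd_left {a b : ℝ} (hab : a ≠ -b) (h : |b| ≤ |a|) : rAdd a b = {a} := by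
  rw [rAdd_eq, if_neg hab, if_pos h]

lemma rAdd_neg_self (a : ℝ) : rAdd a (-a) = Set.Icc (-|a|) |a| := by
  rw [rAdd_eq, if_pos (neg_neg a).symm]

lemma rAdd_neg_self' (a : ℝ) : rAdd (-a) a = Set.Icc (-|a|) |a| := by
  rw [rAdd_eq, if_pos rfl, abs_neg]

lemma rAdd_comm (a b : ℝ) : rAdd a b = rAdd b a := by
  rw [rAdd_eq, rAdd_eq]
  by_cases hab : a = -b
  · have hba : b = -a := by rw [hab, neg_neg]
    have habs : |a| = |b| := by rw [hab, abs_neg]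
    rw [if_pos hab, if_pos hba, habs]
  · have hba : b ≠ -a := fun e => hab (by rw [e, neg_neg])
    rw [if_neg hab, if_neg hba]
    split_ifs with h1 h2 h2
    · have : a = b := by
        rcases abs_eq_abs.1 (le_antisymm h2 h1) with h' | h'
        · exact h'
        · exact absurd h' hab
      rw [this]
    · rfl
    · rfl
    · linarith

lemma rAdd_nonempty' (a b : ℝ) : (rAdd a b).Nonempty := by
  rw [rAdd_eq]
  split_ifs with h1 h2
  · exact ⟨0, Set.mem_Icc.2 ⟨neg_nonpos.2 (abs_nonneg a), abs_nonneg a⟩⟩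
  · exact ⟨a, rfl⟩
  · exact ⟨b, rfl⟩

lemma mem_rAdd_abs {a b x : ℝ} (h : x ∈ rAdd a b) : |x| ≤ max |a| |b| := by
  rw [rAdd_eq] at h
  split_ifs at h with h1 h2
  · rw [Set.mem_Icc] at h
    exact le_trans (abs_le.2 h) (le_max_left _ _)
  · rw [Set.mem_singleton_iff] at h; rw [h]; exact le_max_left _ _
  · rw [Set.mem_singleton_iff] at h; rw [h]; exact le_max_right _ _

lemma setRAdd_singleton (a b : ℝ) : setRAdd {a} {b} = rAdd a b := by
  simp [setRAdd]

lemma setRAdd_comm (A B : Set ℝ) : setRAdd A B = setRAdd B A := by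
  unfold setRAdd
  ext x
  simp only [Set.mem_iUnion, exists_prop]
  constructor
  · rintro ⟨a, ha, b, hb, hx⟩
    exact ⟨b, hb, a, ha, by rwa [← rAdd_comm]⟩
  · rintro ⟨a, ha, b, hb, hx⟩
    exact ⟨b, hb, a, ha, by rwa [← rAdd_comm]⟩

lemma setRAdd_Icc_singleton (m c : ℝ) (hm : 0 ≤ m) :
    setRAdd (Set.Icc (-m) m) {c} = if |c| ≤ m then Set.Icc (-m) m else {c} := by
  split_ifs with h
  · ext x
    simp only [setRAdd, Set.mem_iUnion, Set.mem_singleton_iff, exists_prop, Set.mem_Icc]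
    constructor
    · rintro ⟨y, hy, b, rfl, hx⟩
      have h1 := mem_rAdd_abs hx
      have h2 : |y| ≤ m := abs_le.2 hy
      have : |x| ≤ m := le_trans h1 (max_le h2 h)
      exact abs_le.1 this
    · intro hx
      by_cases hxc : |c| < |x|
      · exact ⟨x, hx, c, rfl, by rw [rAdd_big hxc]; rfl⟩
      · refine ⟨-c, ?_, c, rfl, ?_⟩
        · rw [← abs_le, abs_neg]; exact h
        · rw [rAdd_neg_self' c, Set.mem_Icc, ← abs_le]
          exact not_lt.1 hxc
  · push_neg at h
    ext x
    simp only [setRAdd, Set.mem_iUnion, Set.mem_singleton_iff, exists_prop]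
    constructor
    · rintro ⟨y, hy, b, rfl, hx⟩
      have h2 : |y| ≤ m := abs_le.2 (Set.mem_Icc.1 hy)
      rwa [rAdd_small (lt_of_le_of_lt h2 h), Set.mem_singleton_iff] at hx
    · rintro rfl
      refine ⟨0, Set.mem_Icc.2 ⟨by linarith, hm⟩, x, rfl, ?_⟩
      rw [rAdd_small (by rw [abs_zero]; linarith), Set.mem_singleton_iff]

lemma setRAdd_singleton_Icc (a m : ℝ) (hm : 0 ≤ m) :
    setRAdd {a} (Set.Icc (-m) m) = if |a| ≤ m then Set.Icc (-m) m else {a} := by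
  rw [setRAdd_comm, setRAdd_Icc_singleton _ _ hm]

lemma image_mul_abs_Icc (a b : ℝ) :
    (a * ·) '' Set.Icc (-|b|) |b| = Set.Icc (-|a * b|) |a * b| := by
  ext y
  simp only [Set.mem_image, Set.mem_Icc]
  constructor
  · rintro ⟨x, hx, rfl⟩
    rw [← abs_le] at hx ⊢
    rw [abs_mul, abs_mul]
    exact mul_le_mul_of_nonneg_left hx (abs_nonneg a)
  · intro hy
    rw [← abs_le] at hy
    by_cases ha : a = 0
    · subst ha
      have : y = 0 := by
        rw [abs_mul, abs_zero, zero_mul] at hy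
        exact abs_eq_zero.1 (le_antisymm hy (abs_nonneg y))
      exact ⟨0, by simp [abs_nonneg], by simp [this]⟩
    · refine ⟨y / a, ?_, by field_simp⟩
      rw [← abs_le, abs_div, div_le_iff₀ (abs_pos.2 ha)]
      rw [abs_mul] at hy
      linarith [hy]

lemma image2_mul_abs_Icc (a c : ℝ) :
    Set.image2 (· * ·) (Set.Icc (-|a|) |a|) (Set.Icc (-|c|) |c|) =
      Set.Icc (-|a * c|) |a * c| := by
  ext y
  simp only [Set.mem_image2, Set.mem_Icc]
  constructor
  · rintro ⟨x, hx, z, hz, rfl⟩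
    rw [← abs_le] at hx hz ⊢
    rw [abs_mul, abs_mul]
    exact mul_le_mul hx hz (abs_nonneg z) (abs_nonneg a)
  · intro hy
    rw [← abs_le] at hy
    by_cases ha : a = 0
    · subst ha
      have : y = 0 := by
        rw [abs_mul, abs_zero, zero_mul] at hy
        exact abs_eq_zero.1 (le_antisymm hy (abs_nonneg y))
      exact ⟨0, by simp [abs_nonneg], 0, by simp [abs_nonneg], by simp [this]⟩
    · refine ⟨a, by simp [abs_nonneg, neg_abs_le, le_abs_self], y / a, ?_, by field_simp⟩
      rw [← abs_le, abs_div, div_le_iff₀ (abs_pos.2 ha)]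
      rw [abs_mul] at hy
      linarith [hy]

lemma image_rAdd (a b c : ℝ) : (a * ·) '' rAdd b c = rAdd (a * b) (a * c) := by
  by_cases ha : a = 0
  · subst ha
    simp only [zero_mul]
    rw [Set.Nonempty.image_const (rAdd_nonempty' b c), rAdd_eq]
    simp
  · rw [rAdd_eq b c, rAdd_eq (a * b) (a * c)]
    have hneg : a * b = -(a * c) ↔ b = -c := by
      rw [← mul_neg]
      exact mul_right_inj' ha
    by_cases h1 : b = -c
    · rw [if_pos h1, if_pos (hneg.2 h1), image_mul_abs_Icc]
    · rw [if_neg h1, if_neg (fun e => h1 (hneg.1 e))]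
      have habs : |a * c| ≤ |a * b| ↔ |c| ≤ |b| := by
        rw [abs_mul, abs_mul]
        exact mul_le_mul_iff_right₀ (abs_pos.2 ha)
      by_cases h2 : |c| ≤ |b|
      · rw [if_pos h2, if_pos (habs.2 h2), Set.image_singleton]
      · rw [if_neg h2, if_neg (fun e => h2 (habs.1 e)), Set.image_singleton]

/-- scaling on the right when the sum is a singleton -/
lemma rAdd_scale_right {a b x : ℝ} (c : ℝ) (h : rAdd a b = {x}) :
    rAdd (a * c) (b * c) = {x * c} := by
  rw [mul_comm a c, mul_comm b c, ← image_rAdd, h, Set.image_singleton, mul_comm]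

lemma rAdd_scale_left {a b x : ℝ} (c : ℝ) (h : rAdd a b = {x}) :
    rAdd (c * a) (c * b) = {c * x} := by
  rw [← image_rAdd, h, Set.image_singleton]

/-- key tie lemma for double distributivity -/
lemma rAdd_key {a b c d : ℝ} (hab : a ≠ -b) (hcd : c ≠ -d)
    (h1 : |b| ≤ |a|) (h2 : |d| ≤ |c|) : rAdd (a * c) (b * d) = {a * c} := by
  have hle : |b * d| ≤ |a * c| := by
    rw [abs_mul, abs_mul]
    exact mul_le_mul h1 h2 (abs_nonneg d) (le_trans (abs_nonneg b) h1)
  rcases eq_or_lt_of_le hle with he | hlt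
  · by_cases hz : |a * c| = 0
    · have e1 : a * c = 0 := abs_eq_zero.1 hz
      have e2 : b * d = 0 := abs_eq_zero.1 (he.trans hz)
      rw [e1, e2, rAdd_self]
    · have hac : 0 < |a| * |c| := by
        rw [← abs_mul]
        exact lt_of_le_of_ne (abs_nonneg _) (Ne.symm hz)
      have hc : 0 < |c| := by nlinarith [abs_nonneg a, abs_nonneg c]
      have ha : 0 < |a| := by nlinarith [abs_nonneg a, abs_nonneg c]
      have he' : |b| * |d| = |a| * |c| := by rw [← abs_mul, ← abs_mul, he]
      have hb' : |b| = |a| := by nlinarith [abs_nonneg b, abs_nonneg d]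
      have hd' : |d| = |c| := by nlinarith [abs_nonneg b, abs_nonneg d]
      have hba : b = a := by
        rcases abs_eq_abs.1 hb' with h' | h'
        · exact h'
        · exact absurd (by rw [h', neg_neg] : a = -b) hab
      have hdc : d = c := by
        rcases abs_eq_abs.1 hd' with h' | h'
        · exact h'
        · exact absurd (by rw [h', neg_neg] : c = -d) hcd
      rw [hba, hdc, rAdd_self]
  · exact rAdd_big hlt

/-- `ℝ` with the induced tropical addition and the usual
multiplication is a doubly distributive hyperfield: the addition has
nonempty values, is commutative and associative, `0` is neutral, `-a` is
the unique additive inverse of `a`, multiplication distributes over `⊞`,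
nonzero reals are multiplicatively invertible, and
`(a⊞b)·(c⊞d) = (ac)⊞(ad)⊞(bc)⊞(bd)` for all `a,b,c,d`. -/
theorem real_tropical_doubly_distributive_hyperfield :
    (∀ a b : ℝ, (rAdd a b).Nonempty) ∧
    (∀ a b : ℝ, rAdd a b = rAdd b a) ∧
    (∀ a b c : ℝ, setRAdd (rAdd a b) {c} = setRAdd {a} (rAdd b c)) ∧
    (∀ a : ℝ, rAdd 0 a = {a}) ∧
    (∀ a x : ℝ, 0 ∈ rAdd a x ↔ x = -a) ∧
    (∀ a b c : ℝ, (a * ·) '' rAdd b c = rAdd (a * b) (a * c)) ∧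
    (∀ a : ℝ, a ≠ 0 → ∃ b, a * b = 1) ∧
    (∀ a b c d : ℝ, Set.image2 (· * ·) (rAdd a b) (rAdd c d) =
      setRAdd (setRAdd (rAdd (a * c) (a * d)) {b * c}) {b * d}) := by
  refine ⟨rAdd_nonempty', rAdd_comm, ?_, ?_, ?_, image_rAdd, fun a ha => ⟨a⁻¹, mul_inv_cancel₀ ha⟩, ?_⟩
  · -- associativity
    intro a b c
    by_cases hab : a = -b
    · have hb : rAdd a b = Set.Icc (-|a|) |a| := by rw [rAdd_eq, if_pos hab]
      have habs : |a| = |b| := by rw [hab, abs_neg]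
      by_cases hbc : b = -c
      · have hac : a = c := by rw [hab, hbc, neg_neg]
        have h1 : rAdd b c = Set.Icc (-|b|) |b| := by rw [rAdd_eq, if_pos hbc]
        rw [hb, h1, setRAdd_Icc_singleton _ _ (abs_nonneg a),
          setRAdd_singleton_Icc _ _ (abs_nonneg b),
          if_pos (le_of_eq (by rw [← hac])), if_pos habs.le, habs]
      · by_cases h2 : |c| ≤ |b|
        · rw [hb, rAdd_left hbc h2, setRAdd_Icc_singleton _ _ (abs_nonneg a),
            if_pos (by rw [habs]; exact h2), setRAdd_singleton, hb]
        · push_neg at h2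
          rw [hb, rAdd_small h2, setRAdd_Icc_singleton _ _ (abs_nonneg a),
            if_neg (not_le.2 (by rw [habs]; exact h2)), setRAdd_singleton,
            rAdd_small (show |a| < |c| by rw [habs]; exact h2)]
    · by_cases hbc : b = -c
      · have hbcabs : |b| = |c| := by rw [hbc, abs_neg]
        have h1 : rAdd b c = Set.Icc (-|b|) |b| := by rw [rAdd_eq, if_pos hbc]
        by_cases h2 : |b| ≤ |a|
        · rw [rAdd_left hab h2, setRAdd_singleton, h1,
            setRAdd_singleton_Icc _ _ (abs_nonneg b)]
          rcases lt_or_eq_of_le h2 with h3 | h3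
          · rw [if_neg (not_le.2 h3), rAdd_big (show |c| < |a| by rw [← hbcabs]; exact h3)]
          · have hab2 : a = b := by
              rcases abs_eq_abs.1 h3.symm with h' | h'
              · exact h'
              · exact absurd h' hab
            have hac : a = -c := by rw [hab2, hbc]
            rw [if_pos h3.ge, hac, rAdd_neg_self' c, ← hbcabs]
        · push_neg at h2
          rw [rAdd_small h2, setRAdd_singleton, h1,
            setRAdd_singleton_Icc _ _ (abs_nonneg b), if_pos h2.le]
      · by_cases h1 : |b| ≤ |a| <;> by_cases h2 : |c| ≤ |b|
        · rw [rAdd_left hab h1, rAdd_left hbc h2, setRAdd_singleton, setRAdd_singleton]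
          rcases lt_or_eq_of_le h2 with h3 | h3
          · rw [rAdd_big (lt_of_lt_of_le h3 h1), rAdd_left hab h1]
          · have hcb : c = b := by
              rcases abs_eq_abs.1 h3 with h' | h'
              · exact h'
              · exact absurd (by rw [h', neg_neg] : b = -c) hbc
            rw [hcb]
        · push_neg at h2
          rw [rAdd_left hab h1, rAdd_small h2, setRAdd_singleton]
        · push_neg at h1
          rw [rAdd_small h1, rAdd_left hbc h2, setRAdd_singleton, setRAdd_singleton,
            rAdd_left hbc h2, rAdd_small h1]
        · push_neg at h1 h2
          rw [rAdd_small h1, rAdd_small h2, setRAdd_singleton, setRAdd_singleton,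
            rAdd_small h2, rAdd_small (lt_trans h1 h2)]
  · -- neutral element
    intro a
    by_cases ha : a = 0
    · subst ha; rw [rAdd_self]
    · rw [rAdd_eq, if_neg (fun e => ha (by linarith)),
        if_neg (by rw [abs_zero]; exact not_le.2 (abs_pos.2 ha))]
  · -- inverses
    intro a x
    rw [rAdd_eq]
    by_cases h : a = -x
    · have hx : x = -a := by rw [h, neg_neg]
      rw [if_pos h]
      simp only [Set.mem_Icc, hx, iff_true]
      exact ⟨neg_nonpos.2 (abs_nonneg a), abs_nonneg a⟩
    · have hx : x ≠ -a := fun e => h (by rw [e, neg_neg])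
      rw [if_neg h]
      split_ifs with h2
      · simp only [Set.mem_singleton_iff]
        constructor
        · intro e
          exfalso
          apply h
          have ha : a = 0 := e.symm
          have hx0 : x = 0 := by
            rw [ha, abs_zero] at h2
            exact abs_eq_zero.1 (le_antisymm h2 (abs_nonneg x))
          rw [ha, hx0, neg_zero]
        · intro e; exact absurd e hx
      · push_neg at h2
        simp only [Set.mem_singleton_iff]
        constructor
        · intro e
          exfalso
          rw [← e, abs_zero] at h2
          linarith [abs_nonneg a]
        · intro e; exact absurd e hx
  · -- double distributivity
    intro a b c d
    by_cases hcd : c = -d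
    · have hcds : rAdd c d = Set.Icc (-|c|) |c| := by rw [rAdd_eq, if_pos hcd]
      have hcabs : |c| = |d| := by rw [hcd, abs_neg]
      have hbcn : b * c = -(b * d) := by rw [hcd]; ring
      have hacn : a * c = -(a * d) := by rw [hcd]; ring
      have h1 : rAdd (a * c) (a * d) = Set.Icc (-|a * c|) |a * c| := by
        rw [rAdd_eq, if_pos hacn]
      by_cases hab : a = -b
      · have habs : |a| = |b| := by rw [hab, abs_neg]
        have habd : rAdd a b = Set.Icc (-|a|) |a| := by rw [rAdd_eq, if_pos hab]
        rw [habd, hcds, image2_mul_abs_Icc, h1,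
          setRAdd_Icc_singleton _ _ (abs_nonneg _),
          if_pos (le_of_eq (by rw [abs_mul, abs_mul, habs])),
          setRAdd_Icc_singleton _ _ (abs_nonneg _),
          if_pos (le_of_eq (by rw [abs_mul, abs_mul, habs, hcabs]))]
      · by_cases h2 : |b| ≤ |a|
        · rw [rAdd_left hab h2, hcds, Set.image2_singleton_left, image_mul_abs_Icc, h1,
            setRAdd_Icc_singleton _ _ (abs_nonneg _),
            if_pos (by rw [abs_mul, abs_mul]; exact mul_le_mul_of_nonneg_right h2 (abs_nonneg c)),
            setRAdd_Icc_singleton _ _ (abs_nonneg _),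
            if_pos (by rw [abs_mul, abs_mul, ← hcabs]; exact mul_le_mul_of_nonneg_right h2 (abs_nonneg c))]
        · push_neg at h2
          by_cases hd : d = 0
          · have hc : c = 0 := by rw [hcd, hd, neg_zero]
            subst hd; subst hc
            simp only [mul_zero]
            rw [rAdd_self, setRAdd_singleton, rAdd_self, setRAdd_singleton, rAdd_self,
              Set.image2_singleton_right]
            simp only [mul_zero]
            rw [Set.Nonempty.image_const (rAdd_nonempty' a b)]
          · have hc : c ≠ 0 := fun e => hd (by rw [hcd] at e; linarith)
            have hlt : |a * c| < |b * c| := by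
              rw [abs_mul, abs_mul]
              exact mul_lt_mul_of_pos_right h2 (abs_pos.2 hc)
            rw [rAdd_small h2, hcds, Set.image2_singleton_left, image_mul_abs_Icc, h1,
              setRAdd_Icc_singleton _ _ (abs_nonneg _), if_neg (not_le.2 hlt),
              setRAdd_singleton, rAdd_eq, if_pos hbcn]
    · by_cases hab : a = -b
      · by_cases ha0 : a = 0
        · have hb0 : b = 0 := by rw [ha0] at hab; linarith
          subst ha0; subst hb0
          simp only [zero_mul]
          rw [rAdd_self, setRAdd_singleton, rAdd_self, setRAdd_singleton, rAdd_self,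
            Set.image2_singleton_left]
          simp only [zero_mul]
          rw [Set.Nonempty.image_const (rAdd_nonempty' c d)]
        · have hb : b = -a := by rw [hab, neg_neg]
          have habd : rAdd a b = Set.Icc (-|a|) |a| := by rw [rAdd_eq, if_pos hab]
          have habs : |a| = |b| := by rw [hab, abs_neg]
          by_cases h2 : |d| ≤ |c|
          · have hv : rAdd c d = {c} := rAdd_left hcd h2
            have himg : Set.image2 (· * ·) (Set.Icc (-|a|) |a|) ({c} : Set ℝ) =
                Set.Icc (-|a * c|) |a * c| := by
              rw [Set.image2_singleton_right]
              have : (fun x => x * c) '' Set.Icc (-|a|) |a| =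
                  (c * ·) '' Set.Icc (-|a|) |a| := by
                apply Set.image_congr
                intro x _
                exact mul_comm x c
              rw [this, image_mul_abs_Icc, mul_comm]
            rw [habd, hv, himg, ← image_rAdd, hv, Set.image_singleton, setRAdd_singleton]
            have hbc' : a * c = -(b * c) := by rw [hb]; ring
            rw [rAdd_eq (a * c) (b * c), if_pos hbc',
              setRAdd_Icc_singleton _ _ (abs_nonneg _),
              if_pos (by rw [abs_mul, abs_mul, ← habs]; exact mul_le_mul_of_nonneg_left h2 (abs_nonneg a))]
          · push_neg at h2
            have hv : rAdd c d = {d} := rAdd_small h2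
            have himg : Set.image2 (· * ·) (Set.Icc (-|a|) |a|) ({d} : Set ℝ) =
                Set.Icc (-|a * d|) |a * d| := by
              rw [Set.image2_singleton_right]
              have : (fun x => x * d) '' Set.Icc (-|a|) |a| =
                  (d * ·) '' Set.Icc (-|a|) |a| := by
                apply Set.image_congr
                intro x _
                exact mul_comm x d
              rw [this, image_mul_abs_Icc, mul_comm]
            have hlt : |b * c| < |a * d| := by
              rw [abs_mul, abs_mul, ← habs]
              exact mul_lt_mul_of_pos_left h2 (abs_pos.2 ha0)
            have hbd' : a * d = -(b * d) := by rw [hb]; ring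
            rw [habd, hv, himg, ← image_rAdd, hv, Set.image_singleton, setRAdd_singleton,
              rAdd_big hlt, setRAdd_singleton, rAdd_eq (a * d) (b * d), if_pos hbd']
      · by_cases h1 : |b| ≤ |a| <;> by_cases h2 : |d| ≤ |c|
        · have hu : rAdd a b = {a} := rAdd_left hab h1
          have hv : rAdd c d = {c} := rAdd_left hcd h2
          rw [hu, hv, ← image_rAdd, hv, Set.image_singleton, setRAdd_singleton,
            rAdd_scale_right c hu, setRAdd_singleton, rAdd_key hab hcd h1 h2,
            Set.image2_singleton_left, Set.image_singleton]
        · push_neg at h2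
          have ha0 : a ≠ 0 := by
            intro e
            apply hab
            have : b = 0 := by
              rw [e, abs_zero] at h1
              exact abs_eq_zero.1 (le_antisymm h1 (abs_nonneg b))
            rw [e, this, neg_zero]
          have hu : rAdd a b = {a} := rAdd_left hab h1
          have hv : rAdd c d = {d} := rAdd_small h2
          have hlt : |b * c| < |a * d| := by
            rw [abs_mul, abs_mul]
            calc |b| * |c| ≤ |a| * |c| := mul_le_mul_of_nonneg_right h1 (abs_nonneg c)
              _ < |a| * |d| := mul_lt_mul_of_pos_left h2 (abs_pos.2 ha0)
          rw [hu, hv, ← image_rAdd, hv, Set.image_singleton, setRAdd_singleton,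
            rAdd_big hlt, setRAdd_singleton, rAdd_scale_right d hu,
            Set.image2_singleton_left, Set.image_singleton]
        · push_neg at h1
          have hb0 : b ≠ 0 := fun e => by rw [e, abs_zero] at h1; linarith [abs_nonneg a]
          have hu : rAdd a b = {b} := rAdd_small h1
          have hv : rAdd c d = {c} := rAdd_left hcd h2
          rw [hu, hv, ← image_rAdd, hv, Set.image_singleton, setRAdd_singleton,
            rAdd_scale_right c hu, setRAdd_singleton, rAdd_scale_left b hv,
            Set.image2_singleton_left, Set.image_singleton]
        · push_neg at h1 h2
          have hb0 : b ≠ 0 := fun e => by rw [e, abs_zero] at h1; linarith [abs_nonneg a]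
          have hd0 : d ≠ 0 := fun e => by rw [e, abs_zero] at h2; linarith [abs_nonneg c]
          have hu : rAdd a b = {b} := rAdd_small h1
          have hv : rAdd c d = {d} := rAdd_small h2
          have hadlt : |a * d| < |b * d| := by
            rw [abs_mul, abs_mul]
            exact mul_lt_mul_of_pos_right h1 (abs_pos.2 hd0)
          rw [hu, hv, ← image_rAdd, hv, Set.image_singleton, setRAdd_singleton]
          rcases lt_trichotomy |b * c| |a * d| with h3 | h3 | h3
          · rw [rAdd_big h3, setRAdd_singleton, rAdd_scale_right d hu,
              Set.image2_singleton_left, Set.image_singleton]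
          · by_cases hn : a * d = -(b * c)
            · rw [rAdd_eq (a * d) (b * c), if_pos hn,
                setRAdd_Icc_singleton _ _ (abs_nonneg _), if_neg (not_le.2 hadlt),
                Set.image2_singleton_left, Set.image_singleton]
            · rw [rAdd_eq (a * d) (b * c), if_neg hn, if_pos h3.le, setRAdd_singleton,
                rAdd_scale_right d hu, Set.image2_singleton_left, Set.image_singleton]
          · rw [rAdd_small h3, setRAdd_singleton, rAdd_scale_left b hv,
              Set.image2_singleton_left, Set.image_singleton]
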